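/- Rank bound for aligned interference in the (6,3,4) scheme: if B₁, B₂, C₁, C₂ are diagonal 2m⁴×2m⁴ matrices, V ∈ F^{2m⁴ × m⁴} has columns in 𝒱 = {B₁^{e₁}B₂^{e₂}C₁^{e₃}C₂^{e₄}w : eᵢ ∈ {1,…,m}}, then rank [B₁V, B₂V] ≤ (m+1)⁴ and rank [C₁V, C₂V] ≤ (m+1)⁴. -/

import Mathlib

open Matrix

/-- If every column of `M` is a column of `W`, then `rank M ≤ card ι`. -/
lemma rank_le_card_of_cols {F : Type*} [Field F] {n o ι : Type*} [Fintype n] [Fintype o]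
    [Fintype ι] [DecidableEq ι] (M : Matrix n o F) (W : Matrix n ι F)
    (h : ∀ j, ∃ p, ∀ i, M i j = W i p) : M.rank ≤ Fintype.card ι := by
  choose σ hσ using h
  have hM : M = W * Matrix.of (fun p j => if σ j = p then (1 : F) else 0) := by
    ext i j
    simp [Matrix.mul_apply, Finset.sum_ite_eq, hσ j i]
  rw [hM]
  exact (Matrix.rank_mul_le_left _ _).trans (Matrix.rank_le_card_width _)

theorem rank_bound_634 {F : Type*} [Field F] (m : ℕ) (hm : 0 < m)
    (B₁ B₂ C₁ C₂ : Matrix (Fin (2 * m ^ 4)) (Fin (2 * m ^ 4)) F)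
    (hB₁ : ∀ i j, i ≠ j → B₁ i j = 0) (hB₂ : ∀ i j, i ≠ j → B₂ i j = 0)
    (hC₁ : ∀ i j, i ≠ j → C₁ i j = 0) (hC₂ : ∀ i j, i ≠ j → C₂ i j = 0)
    (w : Fin (2 * m ^ 4) → F)
    (V : Matrix (Fin (2 * m ^ 4)) (Fin (m ^ 4)) F)
    (hV : ∀ c : Fin (m ^ 4), ∃ e₁ e₂ e₃ e₄ : ℕ,
      1 ≤ e₁ ∧ e₁ ≤ m ∧ 1 ≤ e₂ ∧ e₂ ≤ m ∧ 1 ≤ e₃ ∧ e₃ ≤ m ∧ 1 ≤ e₄ ∧ e₄ ≤ m ∧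
      (fun i => V i c) = (B₁ ^ e₁ * B₂ ^ e₂ * C₁ ^ e₃ * C₂ ^ e₄).mulVec w) :
    (Matrix.fromCols (B₁ * V) (B₂ * V)).rank ≤ (m + 1) ^ 4 ∧
    (Matrix.fromCols (C₁ * V) (C₂ * V)).rank ≤ (m + 1) ^ 4 := by
  -- replace the matrices by genuine diagonal matrices
  obtain ⟨b₁, rfl⟩ : ∃ d, B₁ = Matrix.diagonal d := by
    refine ⟨fun i => B₁ i i, ?_⟩
    ext i j; by_cases h : i = j <;> simp [Matrix.diagonal, h, hB₁ i j]
  obtain ⟨b₂, rfl⟩ : ∃ d, B₂ = Matrix.diagonal d := by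
    refine ⟨fun i => B₂ i i, ?_⟩
    ext i j; by_cases h : i = j <;> simp [Matrix.diagonal, h, hB₂ i j]
  obtain ⟨c₁, rfl⟩ : ∃ d, C₁ = Matrix.diagonal d := by
    refine ⟨fun i => C₁ i i, ?_⟩
    ext i j; by_cases h : i = j <;> simp [Matrix.diagonal, h, hC₁ i j]
  obtain ⟨c₂, rfl⟩ : ∃ d, C₂ = Matrix.diagonal d := by
    refine ⟨fun i => C₂ i i, ?_⟩
    ext i j; by_cases h : i = j <;> simp [Matrix.diagonal, h, hC₂ i j]
  choose e₁ e₂ e₃ e₄ h1 h2 h3 h4 h5 h6 h7 h8 hcol using hV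
  set ι := Fin (m + 1) × Fin (m + 1) × Fin (m + 1) × Fin (m + 1) with hι
  have hcard : Fintype.card ι = (m + 1) ^ 4 := by
    simp [hι]; ring
  -- the big matrix of all possible columns
  set W : Matrix (Fin (2 * m ^ 4)) ι F := fun i p =>
    (Matrix.diagonal (b₁ ^ ((p.1 : ℕ) + 1) * b₂ ^ ((p.2.1 : ℕ) + 1) *
      c₁ ^ ((p.2.2.1 : ℕ) + 1) * c₂ ^ ((p.2.2.2 : ℕ) + 1))).mulVec w i with hW
  have hcol' : ∀ c, (fun i => V i c) =
      (Matrix.diagonal (b₁ ^ e₁ c * b₂ ^ e₂ c * c₁ ^ e₃ c * c₂ ^ e₄ c)).mulVec w := by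
    intro c
    rw [hcol c, Matrix.diagonal_pow, Matrix.diagonal_pow, Matrix.diagonal_pow,
      Matrix.diagonal_pow, Matrix.diagonal_mul_diagonal, Matrix.diagonal_mul_diagonal,
      Matrix.diagonal_mul_diagonal]
    rfl
  -- generic column computation
  have key : ∀ (A : Matrix (Fin (2 * m ^ 4)) (Fin (2 * m ^ 4)) F) (c : Fin (m ^ 4))
      (d : Fin (2 * m ^ 4) → F), (∀ i, V i c = (Matrix.diagonal d).mulVec w i) →
      ∀ i, (A * V) i c = ((A * Matrix.diagonal d).mulVec w) i := by
    intro A c d hd i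
    rw [← Matrix.mulVec_mulVec]
    show (A *ᵥ fun k => V k c) i = (A *ᵥ (Matrix.diagonal d *ᵥ w)) i
    congr 1
    funext k
    exact hd k
  constructor
  · refine le_trans (rank_le_card_of_cols _ W ?_) (le_of_eq hcard)
    intro j
    rcases j with c | c
    all_goals (
      have k1 := h1 c; have k2 := h2 c; have k3 := h3 c; have k4 := h4 c
      have k5 := h5 c; have k6 := h6 c; have k7 := h7 c; have k8 := h8 c)
    · refine ⟨(⟨e₁ c, by omega⟩, ⟨e₂ c - 1, by omega⟩, ⟨e₃ c - 1, by omega⟩,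
        ⟨e₄ c - 1, by omega⟩), fun i => ?_⟩
      have h2' : e₂ c - 1 + 1 = e₂ c := by omega
      have h3' : e₃ c - 1 + 1 = e₃ c := by omega
      have h4' : e₄ c - 1 + 1 = e₄ c := by omega
      simp only [Matrix.fromCols_apply_inl, hW, h2', h3', h4']
      rw [key (Matrix.diagonal b₁) c _ (fun i => congrFun (hcol' c) i) i,
        Matrix.diagonal_mul_diagonal]
      have hfun : (fun i => b₁ i * (b₁ ^ e₁ c * b₂ ^ e₂ c * c₁ ^ e₃ c * c₂ ^ e₄ c) i) =
          b₁ ^ (e₁ c + 1) * b₂ ^ e₂ c * c₁ ^ e₃ c * c₂ ^ e₄ c := by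
        funext x
        simp only [Pi.mul_apply, Pi.pow_apply]
        ring
      rw [hfun]
    · refine ⟨(⟨e₁ c - 1, by omega⟩, ⟨e₂ c, by omega⟩, ⟨e₃ c - 1, by omega⟩,
        ⟨e₄ c - 1, by omega⟩), fun i => ?_⟩
      have h1' : e₁ c - 1 + 1 = e₁ c := by omega
      have h3' : e₃ c - 1 + 1 = e₃ c := by omega
      have h4' : e₄ c - 1 + 1 = e₄ c := by omega
      simp only [Matrix.fromCols_apply_inr, hW, h1', h3', h4']
      rw [key (Matrix.diagonal b₂) c _ (fun i => congrFun (hcol' c) i) i,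
        Matrix.diagonal_mul_diagonal]
      have hfun : (fun i => b₂ i * (b₁ ^ e₁ c * b₂ ^ e₂ c * c₁ ^ e₃ c * c₂ ^ e₄ c) i) =
          b₁ ^ e₁ c * b₂ ^ (e₂ c + 1) * c₁ ^ e₃ c * c₂ ^ e₄ c := by
        funext x
        simp only [Pi.mul_apply, Pi.pow_apply]
        ring
      rw [hfun]
  · refine le_trans (rank_le_card_of_cols _ W ?_) (le_of_eq hcard)
    intro j
    rcases j with c | c
    all_goals (
      have k1 := h1 c; have k2 := h2 c; have k3 := h3 c; have k4 := h4 c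
      have k5 := h5 c; have k6 := h6 c; have k7 := h7 c; have k8 := h8 c)
    · refine ⟨(⟨e₁ c - 1, by omega⟩, ⟨e₂ c - 1, by omega⟩, ⟨e₃ c, by omega⟩,
        ⟨e₄ c - 1, by omega⟩), fun i => ?_⟩
      have h1' : e₁ c - 1 + 1 = e₁ c := by omega
      have h2' : e₂ c - 1 + 1 = e₂ c := by omega
      have h4' : e₄ c - 1 + 1 = e₄ c := by omega
      simp only [Matrix.fromCols_apply_inl, hW, h1', h2', h4']
      rw [key (Matrix.diagonal c₁) c _ (fun i => congrFun (hcol' c) i) i,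
        Matrix.diagonal_mul_diagonal]
      have hfun : (fun i => c₁ i * (b₁ ^ e₁ c * b₂ ^ e₂ c * c₁ ^ e₃ c * c₂ ^ e₄ c) i) =
          b₁ ^ e₁ c * b₂ ^ e₂ c * c₁ ^ (e₃ c + 1) * c₂ ^ e₄ c := by
        funext x
        simp only [Pi.mul_apply, Pi.pow_apply]
        ring
      rw [hfun]
    · refine ⟨(⟨e₁ c - 1, by omega⟩, ⟨e₂ c - 1, by omega⟩, ⟨e₃ c - 1, by omega⟩,
        ⟨e₄ c, by omega⟩), fun i => ?_⟩
      have h1' : e₁ c - 1 + 1 = e₁ c := by omega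
      have h2' : e₂ c - 1 + 1 = e₂ c := by omega
      have h3' : e₃ c - 1 + 1 = e₃ c := by omega
      simp only [Matrix.fromCols_apply_inr, hW, h1', h2', h3']
      rw [key (Matrix.diagonal c₂) c _ (fun i => congrFun (hcol' c) i) i,
        Matrix.diagonal_mul_diagonal]
      have hfun : (fun i => c₂ i * (b₁ ^ e₁ c * b₂ ^ e₂ c * c₁ ^ e₃ c * c₂ ^ e₄ c) i) =
          b₁ ^ e₁ c * b₂ ^ e₂ c * c₁ ^ e₃ c * c₂ ^ (e₄ c + 1) := by
        funext x
        simp only [Pi.mul_apply, Pi.pow_apply]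
        ring
      rw [hfun]
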